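/- Assume the charge constraint ∑_{k} Q k = 0, and let R > 0 satisfy ‖Z k‖ < R for all k and ‖z_c‖ < R. Then ζ̃(z) = (z − z_c) · Complex.exp(Γ + ∑_{k} Q k · Complex.log((z − Z k)/(z − z_c))) is complex-differentiable at every z with ‖z‖ > R, and its derivative deriv ζ̃ tends to (Real.exp Γ : ℂ) as z tends to infinity in ℂ. -/

import Mathlib

open Filter

lemma aux_slit {R : ℝ} {a b z : ℂ} (ha : ‖a‖ < R) (hb : ‖b‖ < R) (hz : R < ‖z‖) :
    (z - a) / (z - b) ∈ Complex.slitPlane := by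
  have hzb' : z - b ≠ 0 := sub_ne_zero.mpr (by intro h; rw [h] at hz; linarith)
  rw [Complex.mem_slitPlane_iff]
  by_contra h
  push_neg at h
  obtain ⟨hre, him⟩ := h
  set w := (z - a) / (z - b) with hw
  have hweq : w = (w.re : ℂ) := Complex.ext (by simp) (by simp [him])
  have heq : z - a = (w.re : ℂ) * (z - b) := by
    rw [← hweq, hw, div_mul_cancel₀ _ hzb']
  set t := w.re with ht
  have h1 : z * (1 - (t : ℂ)) = a - (t : ℂ) * b := by linear_combination heq
  have h2 : ‖z * (1 - (t : ℂ))‖ = ‖z‖ * (1 - t) := by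
    rw [norm_mul]
    congr 1
    rw [show (1 : ℂ) - (t : ℂ) = ((1 - t : ℝ) : ℂ) by push_cast; ring,
      Complex.norm_real, Real.norm_eq_abs, abs_of_nonneg (by linarith)]
  have h3 : ‖a - (t : ℂ) * b‖ ≤ ‖a‖ + (-t) * ‖b‖ := by
    calc ‖a - (t : ℂ) * b‖ ≤ ‖a‖ + ‖(t : ℂ) * b‖ := norm_sub_le _ _
    _ = ‖a‖ + (-t) * ‖b‖ := by
        rw [norm_mul, Complex.norm_real, Real.norm_eq_abs, abs_of_nonpos hre]
  have hbn : (0:ℝ) ≤ ‖b‖ := norm_nonneg _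
  have h4 : ‖z‖ * (1 - t) ≤ ‖a‖ + (-t) * ‖b‖ := by rw [← h2, h1]; exact h3
  nlinarith [mul_pos (sub_pos.mpr hz) (show (0:ℝ) < 1 - t by linarith)]

lemma aux_tendsto_div (c w0 : ℂ) :
    Tendsto (fun z : ℂ => c / (z - w0)) (Bornology.cobounded ℂ) (nhds 0) := by
  rw [tendsto_zero_iff_norm_tendsto_zero]
  have h1 : Tendsto (fun z : ℂ => ‖z - w0‖) (Bornology.cobounded ℂ) atTop := by
    apply tendsto_atTop_mono (fun z => ?_)
      (tendsto_atTop_add_const_right _ (-‖w0‖) tendsto_norm_cobounded_atTop)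
    have := norm_sub_norm_le z w0
    linarith
  simpa [norm_div] using
    (tendsto_const_nhds.div_atTop h1 : Tendsto (fun z : ℂ => ‖c‖ / ‖z - w0‖) _ (nhds 0))

lemma aux_hasDerivAt (N : ℕ) (Q : Fin N → ℝ) (Z : Fin N → ℂ) (z_c : ℂ) (Γ : ℝ) (R : ℝ)
    (hZ : ∀ k, ‖Z k‖ < R) (hzc : ‖z_c‖ < R) (z : ℂ) (hz : R < ‖z‖) :
    HasDerivAt (fun z : ℂ =>
        (z - z_c) * Complex.exp ((Γ : ℂ) + ∑ k, (Q k : ℂ) * Complex.log ((z - Z k) / (z - z_c))))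
      (Complex.exp ((Γ : ℂ) + ∑ k, (Q k : ℂ) * Complex.log ((z - Z k) / (z - z_c))) *
        (1 + ∑ k, (Q k : ℂ) * ((Z k - z_c) / (z - Z k)))) z := by
  have hzc' : z - z_c ≠ 0 := sub_ne_zero.mpr (by intro h; rw [h] at hz; linarith)
  have hzk : ∀ k, z - Z k ≠ 0 := fun k =>
    sub_ne_zero.mpr (by intro h; rw [h] at hz; exact absurd (hZ k) (by linarith))
  have hrk : ∀ k : Fin N, HasDerivAt (fun z : ℂ => (z - Z k) / (z - z_c))
      ((Z k - z_c) / (z - z_c) ^ 2) z := by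
    intro k
    have h := ((hasDerivAt_id z).sub_const (Z k)).div ((hasDerivAt_id z).sub_const z_c) hzc'
    exact h.congr_deriv (by simp only [id]; ring)
  have hlog : ∀ k : Fin N, HasDerivAt (fun z : ℂ => Complex.log ((z - Z k) / (z - z_c)))
      ((Z k - z_c) / ((z - Z k) * (z - z_c))) z := by
    intro k
    have h := (hrk k).clog (aux_slit (hZ k) hzc hz)
    convert h using 1
    field_simp [hzc', hzk k]
  have hS : HasDerivAt (fun z : ℂ => ∑ k, (Q k : ℂ) * Complex.log ((z - Z k) / (z - z_c)))
      (∑ k, (Q k : ℂ) * ((Z k - z_c) / ((z - Z k) * (z - z_c)))) z :=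
    HasDerivAt.fun_sum fun k _ => (hlog k).const_mul _
  have hexp := (hS.const_add ((Γ : ℂ))).cexp
  have hmain := ((hasDerivAt_id z).sub_const z_c).mul hexp
  have key : ∑ k, (Q k : ℂ) * ((Z k - z_c) / (z - Z k)) =
      (z - z_c) * ∑ k, (Q k : ℂ) * ((Z k - z_c) / ((z - Z k) * (z - z_c))) := by
    rw [Finset.mul_sum]
    refine Finset.sum_congr rfl fun k _ => ?_
    field_simp [hzc', hzk k]
  exact hmain.congr_deriv (by simp only [id]; rw [key]; ring)

theorem stmt_7 (N : ℕ) (hN : 0 < N) (Q : Fin N → ℝ) (hQ : ∑ k, Q k = 0)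
    (Z : Fin N → ℂ) (z_c : ℂ) (Γ : ℝ) (R : ℝ) (hR : 0 < R)
    (hZ : ∀ k, ‖Z k‖ < R) (hzc : ‖z_c‖ < R) :
    (∀ z : ℂ, R < ‖z‖ →
      DifferentiableAt ℂ
        (fun z : ℂ =>
          (z - z_c) * Complex.exp ((Γ : ℂ) + ∑ k, (Q k : ℂ) * Complex.log ((z - Z k) / (z - z_c))))
        z) ∧
    Tendsto
      (deriv (fun z : ℂ =>
        (z - z_c) * Complex.exp ((Γ : ℂ) + ∑ k, (Q k : ℂ) * Complex.log ((z - Z k) / (z - z_c)))))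
      (Bornology.cobounded ℂ) (nhds ((Real.exp Γ : ℝ) : ℂ)) := by
  constructor
  · intro z hz
    exact (aux_hasDerivAt N Q Z z_c Γ R hZ hzc z hz).differentiableAt
  · have hev : ∀ᶠ z : ℂ in Bornology.cobounded ℂ, R < ‖z‖ :=
      tendsto_norm_cobounded_atTop.eventually (eventually_gt_atTop R)
    -- the limit of the explicit derivative g
    have hratio : ∀ k : Fin N, Tendsto (fun z : ℂ => (z - Z k) / (z - z_c))
        (Bornology.cobounded ℂ) (nhds 1) := by
      intro k
      have h1 : Tendsto (fun z : ℂ => 1 + (z_c - Z k) / (z - z_c))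
          (Bornology.cobounded ℂ) (nhds 1) := by
        simpa using tendsto_const_nhds.add (aux_tendsto_div (z_c - Z k) z_c)
      refine h1.congr' ?_
      filter_upwards [hev] with z hz
      have hzc' : z - z_c ≠ 0 := sub_ne_zero.mpr (by intro h; rw [h] at hz; linarith)
      field_simp
      ring
    have hlogt : ∀ k : Fin N, Tendsto (fun z : ℂ => Complex.log ((z - Z k) / (z - z_c)))
        (Bornology.cobounded ℂ) (nhds 0) := by
      intro k
      have := (hratio k).clog Complex.one_mem_slitPlane
      simpa [Complex.log_one] using this
    have hS : Tendsto (fun z : ℂ => ∑ k, (Q k : ℂ) * Complex.log ((z - Z k) / (z - z_c)))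
        (Bornology.cobounded ℂ) (nhds 0) := by
      have := tendsto_finset_sum Finset.univ
        (fun k _ => ((hlogt k).const_mul ((Q k : ℂ))))
      simpa using this
    have hexp : Tendsto (fun z : ℂ =>
        Complex.exp ((Γ : ℂ) + ∑ k, (Q k : ℂ) * Complex.log ((z - Z k) / (z - z_c))))
        (Bornology.cobounded ℂ) (nhds (Complex.exp (Γ : ℂ))) := by
      have := Complex.continuous_exp.continuousAt.tendsto.comp
        (tendsto_const_nhds.add hS : Tendsto (fun z : ℂ =>
          (Γ : ℂ) + ∑ k, (Q k : ℂ) * Complex.log ((z - Z k) / (z - z_c)))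
          (Bornology.cobounded ℂ) (nhds ((Γ : ℂ) + 0)))
      simpa [Function.comp_def] using this
    have hsum2 : Tendsto (fun z : ℂ => ∑ k, (Q k : ℂ) * ((Z k - z_c) / (z - Z k)))
        (Bornology.cobounded ℂ) (nhds 0) := by
      have := tendsto_finset_sum Finset.univ
        (fun k (_ : k ∈ Finset.univ) => ((aux_tendsto_div (Z k - z_c) (Z k)).const_mul ((Q k : ℂ))))
      simpa using this
    have hg : Tendsto (fun z : ℂ =>
        Complex.exp ((Γ : ℂ) + ∑ k, (Q k : ℂ) * Complex.log ((z - Z k) / (z - z_c))) *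
          (1 + ∑ k, (Q k : ℂ) * ((Z k - z_c) / (z - Z k))))
        (Bornology.cobounded ℂ) (nhds (Complex.exp (Γ : ℂ))) := by
      have := hexp.mul (tendsto_const_nhds.add hsum2 :
        Tendsto (fun z : ℂ => 1 + ∑ k, (Q k : ℂ) * ((Z k - z_c) / (z - Z k)))
          (Bornology.cobounded ℂ) (nhds (1 + 0)))
      simpa using this
    have heq : (fun z : ℂ =>
        Complex.exp ((Γ : ℂ) + ∑ k, (Q k : ℂ) * Complex.log ((z - Z k) / (z - z_c))) *
          (1 + ∑ k, (Q k : ℂ) * ((Z k - z_c) / (z - Z k)))) =ᶠ[Bornology.cobounded ℂ]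
        deriv (fun z : ℂ =>
          (z - z_c) * Complex.exp ((Γ : ℂ) + ∑ k, (Q k : ℂ) * Complex.log ((z - Z k) / (z - z_c)))) := by
      filter_upwards [hev] with z hz
      exact ((aux_hasDerivAt N Q Z z_c Γ R hZ hzc z hz).deriv).symm
    have := hg.congr' heq
    rwa [show ((Real.exp Γ : ℝ) : ℂ) = Complex.exp (Γ : ℂ) by rw [Complex.ofReal_exp]]
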